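/- Let (X,d) be a compact metric space and let (X, f_{1,∞}) be a non-autonomous discrete system such that f_{1,∞} is feeble open, each f_n is surjective, (f_n) converges uniformly to a continuous map f : X → X, and the compositions (f_r^k) converge collectively to (f^k). If f_{1,∞} is thickly sensitive and transitive, then f_{1,∞} is multi-sensitive. -/

import Mathlib

open Set Filter

/-- `nds f i n` is the `n`-step composition `f_i^n = f (i+n-1) ∘ ⋯ ∘ f i`, with `nds f i 0 = id`. -/
def nds {X : Type*} (f : ℕ → X → X) (i : ℕ) : ℕ → X → X
  | 0 => id
  | n + 1 => f (i + n) ∘ nds f i n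

section TopDefs

variable {X : Type*} [TopologicalSpace X]

/-- The NDS `f_{1,∞}` is (topologically) transitive. -/
def NDSTransitive (f : ℕ → X → X) : Prop :=
  ∀ U V : Set X, IsOpen U → U.Nonempty → IsOpen V → V.Nonempty →
    ∃ n : ℕ, 0 < n ∧ (nds f 1 n '' U ∩ V).Nonempty

/-- The NDS `f_{1,∞}` is mixing. -/
def NDSMixing (f : ℕ → X → X) : Prop :=
  ∀ U V : Set X, IsOpen U → U.Nonempty → IsOpen V → V.Nonempty →
    ∃ N : ℕ, ∀ n : ℕ, N ≤ n → (nds f 1 n '' U ∩ V).Nonempty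

/-- The NDS `f_{1,∞}` is weakly mixing. -/
def NDSWeaklyMixing (f : ℕ → X → X) : Prop :=
  ∀ U₁ U₂ V₁ V₂ : Set X, IsOpen U₁ → U₁.Nonempty → IsOpen U₂ → U₂.Nonempty →
    IsOpen V₁ → V₁.Nonempty → IsOpen V₂ → V₂.Nonempty →
    ∃ n : ℕ, 0 < n ∧ (nds f 1 n '' U₁ ∩ V₁).Nonempty ∧ (nds f 1 n '' U₂ ∩ V₂).Nonempty

/-- The NDS `f_{1,∞}` is multi-transitive. -/
def NDSMultiTransitive (f : ℕ → X → X) : Prop :=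
  ∀ m : ℕ, 0 < m → ∀ U V : Fin m → Set X,
    (∀ j, IsOpen (U j)) → (∀ j, (U j).Nonempty) →
    (∀ j, IsOpen (V j)) → (∀ j, (V j).Nonempty) →
    ∃ l : ℕ, 0 < l ∧ ∀ j : Fin m, (nds f 1 (l * (j.1 + 1)) '' U j ∩ V j).Nonempty

/-- The NDS `f_{1,∞}` is totally transitive. -/
def NDSTotallyTransitive (f : ℕ → X → X) : Prop :=
  ∀ k : ℕ, 0 < k → ∀ U V : Set X, IsOpen U → U.Nonempty → IsOpen V → V.Nonempty →
    ∃ n : ℕ, 0 < n ∧ (nds f 1 (n * k) '' U ∩ V).Nonempty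

/-- The NDS `f_{1,∞}` is minimal: every orbit is dense. -/
def NDSMinimal (f : ℕ → X → X) : Prop :=
  ∀ x : X, Dense (Set.range fun n : ℕ => nds f 1 n x)

/-- The NDS `f_{1,∞}` is feeble open. -/
def FeebleOpen (f : ℕ → X → X) : Prop :=
  ∀ i : ℕ, 1 ≤ i → ∀ U : Set X, IsOpen U → U.Nonempty → (interior (f i '' U)).Nonempty

/-- A set of positive integers is syndetic (has bounded gaps). -/
def SyndeticSet (A : Set ℕ) : Prop :=
  ∃ M : ℕ, ∀ i : ℕ, 1 ≤ i → ∃ j ∈ A, i ≤ j ∧ j ≤ i + M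

/-- A set of positive integers is thick (contains arbitrarily long runs). -/
def ThickSet (A : Set ℕ) : Prop :=
  ∀ p : ℕ, ∃ n : ℕ, ∀ j : ℕ, n ≤ j → j ≤ n + p → j ∈ A

/-- The NDS `f_{1,∞}` is syndetically transitive. -/
def NDSSyndeticallyTransitive (f : ℕ → X → X) : Prop :=
  ∀ U V : Set X, IsOpen U → U.Nonempty → IsOpen V → V.Nonempty →
    SyndeticSet {n : ℕ | 0 < n ∧ (nds f 1 n '' U ∩ V).Nonempty}

/-- The NDS `f_{1,∞}` has dense periodic points. -/
def NDSDensePeriodicPoints (f : ℕ → X → X) : Prop :=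
  Dense {x : X | ∃ k : ℕ, 0 < k ∧ ∀ n : ℕ, 0 < n → nds f 1 (k * n) x = x}

/-- The NDS `f_{k,∞}` is strongly transitive. -/
def NDSStronglyTransitiveFrom (f : ℕ → X → X) (k : ℕ) : Prop :=
  ∀ U : Set X, IsOpen U → U.Nonempty →
    ∃ M : ℕ, 0 < M ∧ (⋃ i ∈ Set.Icc 1 M, nds f k i '' U) = Set.univ

/-- An autonomous map is transitive. -/
def MapTransitive {Y : Type*} [TopologicalSpace Y] (g : Y → Y) : Prop :=
  ∀ U V : Set Y, IsOpen U → U.Nonempty → IsOpen V → V.Nonempty →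
    ∃ n : ℕ, 0 < n ∧ (g^[n] '' U ∩ V).Nonempty

/-- An autonomous map is weakly mixing. -/
def MapWeaklyMixing {Y : Type*} [TopologicalSpace Y] (g : Y → Y) : Prop :=
  ∀ U₁ U₂ V₁ V₂ : Set Y, IsOpen U₁ → U₁.Nonempty → IsOpen U₂ → U₂.Nonempty →
    IsOpen V₁ → V₁.Nonempty → IsOpen V₂ → V₂.Nonempty →
    ∃ n : ℕ, 0 < n ∧ (g^[n] '' U₁ ∩ V₁).Nonempty ∧ (g^[n] '' U₂ ∩ V₂).Nonempty

/-- An autonomous map is totally transitive. -/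
def MapTotallyTransitive {Y : Type*} [TopologicalSpace Y] (g : Y → Y) : Prop :=
  ∀ k : ℕ, 0 < k → ∀ U V : Set Y, IsOpen U → U.Nonempty → IsOpen V → V.Nonempty →
    ∃ n : ℕ, 0 < n ∧ (g^[n * k] '' U ∩ V).Nonempty

/-- An autonomous map is syndetically transitive. -/
def MapSyndeticallyTransitive {Y : Type*} [TopologicalSpace Y] (g : Y → Y) : Prop :=
  ∀ U V : Set Y, IsOpen U → U.Nonempty → IsOpen V → V.Nonempty →
    SyndeticSet {n : ℕ | 0 < n ∧ (g^[n] '' U ∩ V).Nonempty}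

/-- An autonomous map is minimal. -/
def MapMinimal {Y : Type*} [TopologicalSpace Y] (g : Y → Y) : Prop :=
  ∀ x : Y, Dense (Set.range fun n : ℕ => g^[n] x)

end TopDefs

section MetricDefs

variable {X : Type*} [MetricSpace X]

/-- The compositions `(f_r^k)` converge collectively to `(f^k)` (w.r.t. the supremum metric). -/
def CollectivelyConverges (f : ℕ → X → X) (g : X → X) : Prop :=
  ∀ ε : ℝ, 0 < ε → ∃ r₀ : ℕ, ∀ r : ℕ, r₀ ≤ r → ∀ k : ℕ, 1 ≤ k → ∀ x : X,
    dist (nds f r k x) (g^[k] x) < ε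

/-- `N(U, δ)`: the times at which the NDS is `δ`-sensitive on `U`. -/
def SensSet (f : ℕ → X → X) (U : Set X) (δ : ℝ) : Set ℕ :=
  {n : ℕ | 0 < n ∧ ∃ x ∈ U, ∃ y ∈ U, δ < dist (nds f 1 n x) (nds f 1 n y)}

/-- The NDS `f_{1,∞}` is multi-sensitive. -/
def NDSMultiSensitive (f : ℕ → X → X) : Prop :=
  ∃ δ : ℝ, 0 < δ ∧ ∀ m : ℕ, 0 < m → ∀ U : Fin m → Set X,
    (∀ i, IsOpen (U i)) → (∀ i, (U i).Nonempty) → (⋂ i, SensSet f (U i) δ).Nonempty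

/-- The NDS `f_{1,∞}` is thickly sensitive. -/
def NDSThicklySensitive (f : ℕ → X → X) : Prop :=
  ∃ δ : ℝ, 0 < δ ∧ ∀ U : Set X, IsOpen U → U.Nonempty → ThickSet (SensSet f U δ)

/-- The NDS `f_{1,∞}` is syndetically sensitive. -/
def NDSSyndeticallySensitive (f : ℕ → X → X) : Prop :=
  ∃ δ : ℝ, 0 < δ ∧ ∀ U : Set X, IsOpen U → U.Nonempty → SyndeticSet (SensSet f U δ)

/-- The NDS `f_{1,∞}` is mildly mixing: its product with every transitive NDS on a compact
metric space is transitive. -/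
def NDSMildlyMixing (f : ℕ → X → X) : Prop :=
  ∀ (Y : Type*) [MetricSpace Y] [CompactSpace Y] (g : ℕ → Y → Y),
    (∀ n : ℕ, 1 ≤ n → Continuous (g n)) → NDSTransitive g →
    NDSTransitive (fun n (p : X × Y) => (f n p.1, g n p.2))

/-- The NDS `f_{1,∞}` is Li–Yorke chaotic. -/
def LiYorkeChaotic (f : ℕ → X → X) : Prop :=
  ∃ S : Set X, ¬S.Countable ∧ ∀ x ∈ S, ∀ y ∈ S, x ≠ y →
    Filter.liminf (fun n : ℕ => dist (nds f 1 n x) (nds f 1 n y)) Filter.atTop = 0 ∧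
    0 < Filter.limsup (fun n : ℕ => dist (nds f 1 n x) (nds f 1 n y)) Filter.atTop

end MetricDefs


lemma nds_add {X : Type*} (f : ℕ → X → X) (i a b : ℕ) (x : X) :
    nds f i (a + b) x = nds f (i + a) b (nds f i a x) := by
  induction b with
  | zero => rfl
  | succ b ih =>
      show f (i + (a + b)) (nds f i (a + b) x) = f ((i + a) + b) (nds f (i + a) b (nds f i a x))
      rw [ih, Nat.add_assoc]

lemma nds_continuous {X : Type*} [TopologicalSpace X] (f : ℕ → X → X)
    (hcont : ∀ n : ℕ, 1 ≤ n → Continuous (f n)) (i : ℕ) (hi : 1 ≤ i) :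
    ∀ n : ℕ, Continuous (nds f i n) := by
  intro n
  induction n with
  | zero => exact continuous_id
  | succ n ih => exact (hcont (i + n) (le_trans hi (Nat.le_add_right i n))).comp ih

lemma nds_surjective {X : Type*} (f : ℕ → X → X)
    (hsurj : ∀ n : ℕ, 1 ≤ n → Function.Surjective (f n)) (i : ℕ) (hi : 1 ≤ i) :
    ∀ n : ℕ, Function.Surjective (nds f i n) := by
  intro n
  induction n with
  | zero => exact Function.surjective_id
  | succ n ih => exact (hsurj (i + n) (le_trans hi (Nat.le_add_right i n))).comp ih

lemma nds_feebleOpen {X : Type*} [TopologicalSpace X] (f : ℕ → X → X) (hfo : FeebleOpen f)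
    (k : ℕ) (U : Set X) (hU : IsOpen U) (hUne : U.Nonempty) :
    (interior (nds f 1 k '' U)).Nonempty := by
  induction k with
  | zero =>
      have h : nds f 1 0 '' U = U := Set.image_id U
      rw [h, hU.interior_eq]; exact hUne
  | succ k ih =>
      have himg : nds f 1 (k+1) '' U = f (1 + k) '' (nds f 1 k '' U) := by
        rw [show nds f 1 (k+1) = f (1 + k) ∘ nds f 1 k from rfl, Set.image_comp]
      have h1 := hfo (1 + k) (by omega) (interior (nds f 1 k '' U)) isOpen_interior ih
      have hsub : f (1 + k) '' interior (nds f 1 k '' U) ⊆ nds f 1 (k+1) '' U := by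
        rw [himg]; exact Set.image_mono interior_subset
      exact h1.mono (interior_mono hsub)

lemma chainLemma {X : Type*} [TopologicalSpace X] [Nonempty X] (F : X → X) (hF : Continuous F)
    (hhit : ∀ A B : Set X, IsOpen A → A.Nonempty → IsOpen B → B.Nonempty →
      ∃ k, 1 ≤ k ∧ ∃ a ∈ A, F^[k] a ∈ B) :
    ∀ (m : ℕ) (V : Fin m → Set X), (∀ i, IsOpen (V i)) → (∀ i, (V i).Nonempty) →
      ∃ W : Set X, IsOpen W ∧ W.Nonempty ∧ ∃ k : Fin m → ℕ, ∀ i, ∀ w ∈ W, F^[k i] w ∈ V i := by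
  intro m
  induction m with
  | zero =>
      intro V _ _
      exact ⟨Set.univ, isOpen_univ, Set.univ_nonempty, fun i => 0, fun i => i.elim0⟩
  | succ m ih =>
      intro V hVo hVne
      obtain ⟨W', hW'o, hW'ne, k', hk'⟩ :=
        ih (fun j => V j.castSucc) (fun j => hVo _) (fun j => hVne _)
      obtain ⟨kl, hkl1, a, haW, haV⟩ := hhit W' (V (Fin.last m)) hW'o hW'ne (hVo _) (hVne _)
      refine ⟨W' ∩ F^[kl] ⁻¹' (V (Fin.last m)), hW'o.inter ((hVo _).preimage (hF.iterate kl)),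
        ⟨a, haW, haV⟩, fun i => Fin.lastCases kl k' i, ?_⟩
      intro i
      refine Fin.lastCases ?_ ?_ i
      · intro w hw
        simp only [Fin.lastCases_last]
        exact hw.2
      · intro j w hw
        simp only [Fin.lastCases_castSucc]
        exact hk' j w hw.1

theorem thicklySensitive_transitive_implies_multiSensitive {X : Type*} [MetricSpace X]
    [CompactSpace X]
    (f : ℕ → X → X) (F : X → X)
    (hcont : ∀ n : ℕ, 1 ≤ n → Continuous (f n))
    (hfo : FeebleOpen f)
    (hsurj : ∀ n : ℕ, 1 ≤ n → Function.Surjective (f n))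
    (hF : Continuous F)
    (hunif : TendstoUniformly (fun n x => f n x) F Filter.atTop)
    (hcoll : CollectivelyConverges f F)
    (hts : NDSThicklySensitive f) (htrans : NDSTransitive f) :
    NDSMultiSensitive f := by
  classical
  obtain ⟨δ, hδ, hthick⟩ := hts
  have hc1 : ∀ n : ℕ, Continuous (nds f 1 n) := nds_continuous f hcont 1 le_rfl
  have htwo : ∀ U : Set X, IsOpen U → U.Nonempty → ∃ x ∈ U, ∃ y ∈ U, x ≠ y := by
    intro U hUo hUne
    obtain ⟨n, hn⟩ := hthick U hUo hUne 0
    obtain ⟨hpos, x, hx, y, hy, hd⟩ := hn n le_rfl (Nat.le_add_right _ _)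
    refine ⟨x, hx, y, hy, ?_⟩
    rintro rfl
    rw [dist_self] at hd; linarith
  have hofin : ∀ S : Set X, S.Finite → ∀ U : Set X, IsOpen U → U.Nonempty →
      (U \ S).Nonempty := by
    intro S hS
    refine Set.Finite.induction_on S hS ?_ ?_
    · intro U hUo hUne; simpa using hUne
    · intro a s _ hsfin ih U hUo hUne
      have h1 : (U \ s).Nonempty := ih U hUo hUne
      have h2 : IsOpen (U \ s) := hUo.sdiff hsfin.isClosed
      obtain ⟨x, hx, y, hy, hxy⟩ := htwo _ h2 h1
      rcases eq_or_ne x a with rfl | hxa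
      · refine ⟨y, hy.1, ?_⟩
        intro h
        rcases Set.mem_insert_iff.1 h with rfl | hys
        · exact hxy rfl
        · exact hy.2 hys
      · refine ⟨x, hx.1, ?_⟩
        intro h
        rcases Set.mem_insert_iff.1 h with rfl | hxs
        · exact hxa rfl
        · exact hx.2 hxs
  obtain ⟨bas, hbc, hbne, hbas⟩ := TopologicalSpace.exists_countable_basis X
  have hGdense : Dense (⋂ V ∈ bas, ⋃ (n : ℕ) (_ : 1 ≤ n), nds f 1 n ⁻¹' V) := by
    refine dense_biInter_of_isOpen ?_ hbc ?_
    · intro V hV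
      exact isOpen_iUnion fun n => isOpen_iUnion fun _ => (hbas.isOpen hV).preimage (hc1 n)
    · intro V hV
      rw [dense_iff_inter_open]
      intro U hUo hUne
      have hVne : V.Nonempty := Set.nonempty_iff_ne_empty.2 (by rintro rfl; exact hbne hV)
      obtain ⟨n, hn0, z, hz⟩ := htrans U V hUo hUne (hbas.isOpen hV) hVne
      obtain ⟨⟨u, hu, rfl⟩, hzV⟩ := hz
      exact ⟨u, hu, Set.mem_iUnion.2 ⟨n, Set.mem_iUnion.2 ⟨hn0, hzV⟩⟩⟩
  have hhitf : ∀ A B : Set X, IsOpen A → A.Nonempty → IsOpen B → B.Nonempty → ∀ N : ℕ,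
      ∃ n, N < n ∧ ∃ a ∈ A, nds f 1 n a ∈ B := by
    intro A B hAo hAne hBo hBne N
    obtain ⟨x, hxA, hxG⟩ := hGdense.inter_open_nonempty A hAo hAne
    have hSfin : ((fun n => nds f 1 n x) '' Set.Iic N).Finite := (Set.finite_Iic N).image _
    obtain ⟨y, hyB, hyS⟩ := hofin _ hSfin B hBo hBne
    obtain ⟨V, hVb, hyV, hVsub⟩ :=
      hbas.exists_subset_of_mem_open (show y ∈ B \ _ from ⟨hyB, hyS⟩) (hBo.sdiff hSfin.isClosed)
    have hxO : x ∈ ⋃ (n : ℕ) (_ : 1 ≤ n), nds f 1 n ⁻¹' V := Set.mem_iInter₂.1 hxG V hVb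
    obtain ⟨n, hn1, hxV⟩ := Set.mem_iUnion₂.1 hxO
    have hnB := hVsub hxV
    refine ⟨n, ?_, x, hxA, hnB.1⟩
    by_contra hle
    push_neg at hle
    exact hnB.2 ⟨n, hle, rfl⟩
  have hFhit : ∀ A B : Set X, IsOpen A → A.Nonempty → IsOpen B → B.Nonempty →
      ∃ k, 1 ≤ k ∧ ∃ a ∈ A, F^[k] a ∈ B := by
    intro A B hAo hAne hBo hBne
    obtain ⟨b, hbB⟩ := hBne
    obtain ⟨γ, hγ, hball⟩ := Metric.isOpen_iff.1 hBo b hbB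
    obtain ⟨r₁, hr₁⟩ := hcoll (γ/2) (by linarith)
    have hA'o : IsOpen (nds f 1 (max r₁ 1 - 1) ⁻¹' A) := hAo.preimage (hc1 _)
    have hA'ne : (nds f 1 (max r₁ 1 - 1) ⁻¹' A).Nonempty := by
      obtain ⟨a0, ha0⟩ := hAne
      obtain ⟨x0, hx0⟩ := nds_surjective f hsurj 1 le_rfl (max r₁ 1 - 1) a0
      exact ⟨x0, by simp only [Set.mem_preimage, hx0]; exact ha0⟩
    obtain ⟨n, hnr, x, hxA', hxB⟩ := hhitf _ (Metric.ball b (γ/2)) hA'o hA'ne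
      Metric.isOpen_ball ⟨b, Metric.mem_ball_self (by linarith)⟩ (max r₁ 1 - 1)
    have hm1 : r₁ ≤ max r₁ 1 := le_max_left _ _
    have hm2 : 1 ≤ max r₁ 1 := le_max_right _ _
    have hk1 : 1 ≤ n - (max r₁ 1 - 1) := by omega
    have hdec : nds f 1 n x = nds f (max r₁ 1) (n - (max r₁ 1 - 1)) (nds f 1 (max r₁ 1 - 1) x) := by
      have h1 : (max r₁ 1 - 1) + (n - (max r₁ 1 - 1)) = n := by omega
      have h2 : 1 + (max r₁ 1 - 1) = max r₁ 1 := by omega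
      rw [← h1, nds_add, h2, h1]
    refine ⟨n - (max r₁ 1 - 1), hk1, nds f 1 (max r₁ 1 - 1) x, hxA', hball ?_⟩
    have hcc := hr₁ (max r₁ 1) hm1 (n - (max r₁ 1 - 1)) hk1 (nds f 1 (max r₁ 1 - 1) x)
    have h3 : dist (nds f 1 n x) b < γ/2 := hxB
    rw [hdec] at h3
    rw [Metric.mem_ball]
    calc dist (F^[n - (max r₁ 1 - 1)] (nds f 1 (max r₁ 1 - 1) x)) b
        ≤ dist (F^[n - (max r₁ 1 - 1)] (nds f 1 (max r₁ 1 - 1) x))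
            (nds f (max r₁ 1) (n - (max r₁ 1 - 1)) (nds f 1 (max r₁ 1 - 1) x))
          + dist (nds f (max r₁ 1) (n - (max r₁ 1 - 1)) (nds f 1 (max r₁ 1 - 1) x)) b :=
        dist_triangle _ _ _
      _ < γ/2 + γ/2 := add_lt_add (by rw [dist_comm]; exact hcc) h3
      _ = γ := by ring
  obtain ⟨r₀, hr₀⟩ := hcoll (δ/8) (by linarith)
  have hR1 : 1 ≤ max r₀ 1 := le_max_right _ _
  have hRr₀ : r₀ ≤ max r₀ 1 := le_max_left _ _
  set R := max r₀ 1 with hRdef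
  set ρ := R - 1 with hρdef
  have hRρ : 1 + ρ = R := by omega
  have hFthick : ∀ V : Set X, IsOpen V → V.Nonempty → ∀ p : ℕ,
      ∃ M, 1 ≤ M ∧ ∀ s, M ≤ s → s ≤ M + p →
        ∃ a ∈ V, ∃ b ∈ V, 3*δ/4 < dist (F^[s] a) (F^[s] b) := by
    intro V hVo hVne p
    have hU'o : IsOpen (nds f 1 ρ ⁻¹' V) := hVo.preimage (hc1 _)
    have hU'ne : (nds f 1 ρ ⁻¹' V).Nonempty := by
      obtain ⟨v, hv⟩ := hVne
      obtain ⟨x0, hx0⟩ := nds_surjective f hsurj 1 le_rfl ρ v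
      exact ⟨x0, by simp only [Set.mem_preimage, hx0]; exact hv⟩
    obtain ⟨n, hrun⟩ := hthick _ hU'o hU'ne (p + R)
    have hn1 : n ≤ max n R := le_max_left _ _
    have hn2 : R ≤ max n R := le_max_right _ _
    refine ⟨max n R - ρ, by omega, ?_⟩
    intro s hs1 hs2
    obtain ⟨hpos, x, hx, y, hy, hd⟩ := hrun (s + ρ) (by omega) (by omega)
    have hs1' : 1 ≤ s := by omega
    have hdx : nds f 1 (s + ρ) x = nds f R s (nds f 1 ρ x) := by
      rw [show s + ρ = ρ + s from by omega, nds_add, hRρ]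
    have hdy : nds f 1 (s + ρ) y = nds f R s (nds f 1 ρ y) := by
      rw [show s + ρ = ρ + s from by omega, nds_add, hRρ]
    refine ⟨nds f 1 ρ x, hx, nds f 1 ρ y, hy, ?_⟩
    have e1 := hr₀ R hRr₀ s hs1' (nds f 1 ρ x)
    have e2 := hr₀ R hRr₀ s hs1' (nds f 1 ρ y)
    rw [hdx, hdy] at hd
    have tri := dist_triangle4 (nds f R s (nds f 1 ρ x)) (F^[s] (nds f 1 ρ x))
      (F^[s] (nds f 1 ρ y)) (nds f R s (nds f 1 ρ y))
    have e2' : dist (F^[s] (nds f 1 ρ y)) (nds f R s (nds f 1 ρ y)) < δ/8 := by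
      rw [dist_comm]; exact e2
    linarith
  refine ⟨δ/2, by linarith, ?_⟩
  intro m hm U hUo hUne
  have hXne : Nonempty X := ⟨(hUne ⟨0, hm⟩).some⟩
  obtain ⟨W, hWo, hWne, k, hk⟩ := chainLemma F hF hFhit m
    (fun i => interior (nds f 1 ρ '' U i)) (fun i => isOpen_interior)
    (fun i => nds_feebleOpen f hfo ρ (U i) (hUo i) (hUne i))
  obtain ⟨M, hM1, hMrun⟩ := hFthick W hWo hWne (Finset.univ.sup k)
  refine ⟨ρ + M, Set.mem_iInter.2 fun i => ?_⟩
  have hki : k i ≤ Finset.univ.sup k := Finset.le_sup (Finset.mem_univ i)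
  obtain ⟨a, haW, b, hbW, hdist⟩ := hMrun (M + k i) (Nat.le_add_right _ _) (by omega)
  have haV := hk i a haW
  have hbV := hk i b hbW
  obtain ⟨xa, hxa, hxae⟩ := interior_subset haV
  obtain ⟨xb, hxb, hxbe⟩ := interior_subset hbV
  have hTa : nds f 1 (ρ + M) xa = nds f R M (F^[k i] a) := by rw [nds_add, hRρ, hxae]
  have hTb : nds f 1 (ρ + M) xb = nds f R M (F^[k i] b) := by rw [nds_add, hRρ, hxbe]
  have e1 := hr₀ R hRr₀ M hM1 (F^[k i] a)
  have e2 := hr₀ R hRr₀ M hM1 (F^[k i] b)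
  rw [← Function.iterate_add_apply F M (k i) a] at e1
  rw [← Function.iterate_add_apply F M (k i) b] at e2
  refine ⟨by omega, xa, hxa, xb, hxb, ?_⟩
  rw [hTa, hTb]
  have tri := dist_triangle4 (F^[M + k i] a) (nds f R M (F^[k i] a))
    (nds f R M (F^[k i] b)) (F^[M + k i] b)
  have e1' : dist (F^[M + k i] a) (nds f R M (F^[k i] a)) < δ/8 := by
    rw [dist_comm]; exact e1
  linarith
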